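/- Let G be the composite graph in which each of the n subgraphs G_i is a path graph on m vertices with its bridge node chosen as an endpoint of the path, and the backbone graph B is a path l_1 − l_2 − ... − l_n on the n bridge nodes. Then, with N = nm, H_C(G) = nm(m²−1)/(12N) + nm²(n²−1)/(12N) + nm²(m−1)(n−1)/(4N); that is, this graph attains the upper bound on coherence among all composite graphs with n subgraphs of m vertices each. -/

import Mathlib

open scoped Classical
open Matrix

noncomputable section

/-- The four Moore–Penrose conditions for `B` to be the pseudoinverse of `A`. -/
def IsMoorePenroseInv {α : Type*} [Fintype α] (A B : Matrix α α ℝ) : Prop :=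
  A * B * A = A ∧ B * A * B = B ∧ (A * B)ᵀ = A * B ∧ (B * A)ᵀ = B * A

/-- The Moore–Penrose pseudoinverse of a real square matrix (it exists and is
unique; we extract it by choice). -/
noncomputable def pinv {α : Type*} [Fintype α] (A : Matrix α α ℝ) : Matrix α α ℝ :=
  if h : ∃ B, IsMoorePenroseInv A B then h.choose else 0

/-- The (real) Laplacian matrix of a simple graph. -/
noncomputable def lap {α : Type*} [Fintype α] (H : SimpleGraph α) : Matrix α α ℝ :=
  letI := Classical.decEq α
  letI : DecidableRel H.Adj := Classical.decRel _
  H.lapMatrix ℝ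

/-- The standard basis (indicator) vector `e_u`. -/
noncomputable def evec {α : Type*} [Fintype α] (u : α) : α → ℝ :=
  fun w => if w = u then 1 else 0

/-- Resistance distance `r(u,v) = (e_u - e_v)ᵀ L† (e_u - e_v)`. -/
noncomputable def resistance {α : Type*} [Fintype α] (H : SimpleGraph α) (u v : α) : ℝ :=
  (evec u - evec v) ⬝ᵥ (pinv (lap H)).mulVec (evec u - evec v)

/-- Effective resistance `Ω_H = Σ_{u<v} r(u,v) = (1/2) Σ_{u,v} r(u,v)`. -/
noncomputable def effRes {α : Type*} [Fintype α] (H : SimpleGraph α) : ℝ :=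
  (1 / 2) * ∑ u : α, ∑ v : α, resistance H u v

/-- Network coherence `H_C(H) = Ω_H / (2 |V_H|)`. -/
noncomputable def coherence {α : Type*} [Fintype α] (H : SimpleGraph α) : ℝ :=
  effRes H / (2 * Fintype.card α)

/-- Resistance centrality `C(v) = Σ_{u ≠ v} r(u,v)`. -/
noncomputable def rcentrality {α : Type*} [Fintype α] (H : SimpleGraph α) (v : α) : ℝ :=
  ∑ u ∈ Finset.univ.filter (· ≠ v), resistance H u v

/-- The composite graph built from disjoint subgraphs `G i` with bridge nodes `l i`,
connected according to the backbone graph `B` on the indices. -/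
def composite {n : ℕ} (V : Fin n → Type*) (G : ∀ i, SimpleGraph (V i))
    (l : ∀ i, V i) (B : SimpleGraph (Fin n)) : SimpleGraph (Σ i, V i) where
  Adj x y := (∃ h : x.1 = y.1, (G y.1).Adj (h ▸ x.2) y.2) ∨
    (B.Adj x.1 y.1 ∧ x.2 = l x.1 ∧ y.2 = l y.1)
  symm := ⟨by
    rintro ⟨i, u⟩ ⟨j, v⟩ (⟨h, hadj⟩ | ⟨hB, hu, hv⟩)
    · dsimp only at h
      subst h
      exact Or.inl ⟨rfl, hadj.symm⟩
    · exact Or.inr ⟨hB.symm, hv, hu⟩⟩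
  loopless := ⟨by
    rintro ⟨i, u⟩ (⟨h, hadj⟩ | ⟨hB, _, _⟩)
    · exact (G i).irrefl hadj
    · exact B.irrefl hB⟩


/-- nat distance matrix entry of the comb graph -/
def DN (i j k l : ℕ) : ℕ := if i = k then Nat.dist j l else Nat.dist i k + j + l
/-- nat adjacency of the comb graph -/
def ADJ (i j k l : ℕ) : Prop :=
  (i = k ∧ (j + 1 = l ∨ l + 1 = j)) ∨ ((i + 1 = k ∨ k + 1 = i) ∧ j = 0 ∧ l = 0)

lemma DN_self (i j : ℕ) : DN i j i j = 0 := by simp [DN, Nat.dist]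
lemma DN_comm (i j k l : ℕ) : DN i j k l = DN k l i j := by
  simp only [DN, Nat.dist]; split_ifs <;> omega

lemma DN_adj {i j k l : ℕ} (h : ADJ i j k l) : DN k l i j = 1 := by
  simp only [ADJ] at h; simp only [DN, Nat.dist]; split_ifs <;> omega

lemma nat_main {n m i j i' j' : ℕ} (hi : i < n) (hj : j < m) (hi' : i' < n) (hj' : j' < m)
    (hne : ¬(i = i' ∧ j = j')) :
    ∃ k0 l0, k0 < n ∧ l0 < m ∧ ADJ i j k0 l0 ∧ DN k0 l0 i' j' + 1 = DN i j i' j' ∧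
      ∀ k l, ¬(k = k0 ∧ l = l0) → ADJ i j k l → DN k l i' j' = DN i j i' j' + 1 := by
  rcases eq_or_ne i i' with rfl | hii
  · rcases Nat.lt_or_ge j' j with h | h
    · refine ⟨i, j - 1, hi, by omega, ?_, ?_, ?_⟩
      · exact Or.inl ⟨rfl, Or.inr (by omega)⟩
      · simp only [DN, Nat.dist]; split_ifs <;> omega
      · rintro k l hkl hadj; simp only [ADJ] at hadj
        simp only [DN, Nat.dist]; split_ifs <;> omega
    · have hjj : j < j' := by omega
      refine ⟨i, j + 1, hi, by omega, ?_, ?_, ?_⟩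
      · exact Or.inl ⟨rfl, Or.inl rfl⟩
      · simp only [DN, Nat.dist]; split_ifs <;> omega
      · rintro k l hkl hadj; simp only [ADJ] at hadj
        simp only [DN, Nat.dist]; split_ifs <;> omega
  · rcases Nat.eq_zero_or_pos j with rfl | hjpos
    · rcases Nat.lt_or_ge i i' with h | h
      · refine ⟨i + 1, 0, by omega, by omega, ?_, ?_, ?_⟩
        · exact Or.inr ⟨Or.inl rfl, rfl, rfl⟩
        · simp only [DN, Nat.dist]; split_ifs <;> omega
        · rintro k l hkl hadj; simp only [ADJ] at hadj
          simp only [DN, Nat.dist]; split_ifs <;> omega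
      · have h' : i' < i := by omega
        refine ⟨i - 1, 0, by omega, by omega, ?_, ?_, ?_⟩
        · exact Or.inr ⟨Or.inr (by omega), rfl, rfl⟩
        · simp only [DN, Nat.dist]; split_ifs <;> omega
        · rintro k l hkl hadj; simp only [ADJ] at hadj
          simp only [DN, Nat.dist]; split_ifs <;> omega
    · refine ⟨i, j - 1, hi, by omega, ?_, ?_, ?_⟩
      · exact Or.inl ⟨rfl, Or.inr (by omega)⟩
      · simp only [DN, Nat.dist]; split_ifs <;> omega
      · rintro k l hkl hadj; simp only [ADJ] at hadj
        simp only [DN, Nat.dist]; split_ifs <;> omega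




def Gc (n m : ℕ) (hm : 0 < m) : SimpleGraph (Σ _ : Fin n, Fin m) :=
  composite (fun _ : Fin n => Fin m) (fun _ => SimpleGraph.pathGraph m)
    (fun _ => (⟨0, hm⟩ : Fin m)) (SimpleGraph.pathGraph n)

lemma Gc_adj {n m : ℕ} (hm : 0 < m) (u w : Σ _ : Fin n, Fin m) :
    (Gc n m hm).Adj u w ↔ ADJ u.1.val u.2.val w.1.val w.2.val := by
  obtain ⟨i, j⟩ := u; obtain ⟨k, l⟩ := w
  constructor
  · rintro (⟨h, hadj⟩ | ⟨hB, h1, h2⟩)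
    · dsimp only at h
      subst h
      exact Or.inl ⟨rfl, SimpleGraph.pathGraph_adj.1 hadj⟩
    · exact Or.inr ⟨SimpleGraph.pathGraph_adj.1 hB,
        congrArg Fin.val h1, congrArg Fin.val h2⟩
  · rintro (⟨h, hadj⟩ | ⟨hB, h1, h2⟩)
    · dsimp only at h
      have hik : i = k := Fin.ext h
      subst hik
      exact Or.inl ⟨rfl, SimpleGraph.pathGraph_adj.2 hadj⟩
    · exact Or.inr ⟨SimpleGraph.pathGraph_adj.2 hB, Fin.ext h1, Fin.ext h2⟩

abbrev VT (n m : ℕ) := Σ _ : Fin n, Fin m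

def dn {n m : ℕ} (u v : VT n m) : ℕ := DN u.1.val u.2.val v.1.val v.2.val

lemma dn_self {n m : ℕ} (u : VT n m) : dn u u = 0 := DN_self _ _
lemma dn_comm {n m : ℕ} (u v : VT n m) : dn u v = dn v u := DN_comm _ _ _ _

lemma sigma_ne {n m : ℕ} {u w : VT n m} (h : ¬(u.1.val = w.1.val ∧ u.2.val = w.2.val)) :
    u ≠ w := by
  rintro rfl; exact h ⟨rfl, rfl⟩

lemma sigma_val_ne {n m : ℕ} {u w : VT n m} (h : u ≠ w) :
    ¬(u.1.val = w.1.val ∧ u.2.val = w.2.val) := by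
  rintro ⟨h1, h2⟩
  exact h (Sigma.ext (Fin.ext h1) (heq_of_eq (Fin.ext h2)))

lemma sum_key {n m : ℕ} (hm : 0 < m) (u v : VT n m) :
    ∑ w : VT n m, (if (Gc n m hm).Adj u w then (1 + (dn u v : ℝ) - dn w v) else 0)
      = if u = v then 0 else 2 := by
  by_cases huv : u = v
  · subst huv
    rw [if_pos rfl]
    apply Finset.sum_eq_zero
    intro w _
    by_cases h : (Gc n m hm).Adj u w
    · rw [if_pos h]
      have h2 : dn w u = 1 := DN_adj ((Gc_adj hm u w).1 h)
      rw [dn_self, h2]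
      norm_num
    · rw [if_neg h]
  · rw [if_neg huv]
    obtain ⟨k0, l0, hk0, hl0, hadj, hstep, hother⟩ :=
      nat_main u.1.isLt u.2.isLt v.1.isLt v.2.isLt (sigma_val_ne huv)
    have hmain : ∀ w : VT n m, w ≠ (⟨⟨k0, hk0⟩, ⟨l0, hl0⟩⟩ : VT n m) →
        (if (Gc n m hm).Adj u w then (1 + (dn u v : ℝ) - dn w v) else 0) = 0 := by
      intro w hww
      by_cases h : (Gc n m hm).Adj u w
      · rw [if_pos h]
        have hnn := hother w.1.val w.2.val (sigma_val_ne hww) ((Gc_adj hm u w).1 h)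
        have hc : (dn w v : ℝ) = (dn u v : ℝ) + 1 := by
          unfold dn; exact_mod_cast hnn
        rw [hc]; ring
      · rw [if_neg h]
    rw [Finset.sum_eq_single _ (fun w _ hw => hmain w hw)
      (fun hmem => absurd (Finset.mem_univ _) hmem)]
    rw [if_pos ((Gc_adj hm u _).2 hadj)]
    have hc : (dn (⟨⟨k0, hk0⟩, ⟨l0, hl0⟩⟩ : VT n m) v : ℝ) + 1 = (dn u v : ℝ) := by
      unfold dn; exact_mod_cast hstep
    linarith



lemma lap_apply {α : Type*} [Fintype α] (G : SimpleGraph α) (u w : α) :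
    lap G u w = (if u = w then (G.degree u : ℝ) else 0) - (if G.Adj u w then 1 else 0) := by
  classical
  unfold lap
  simp only [SimpleGraph.lapMatrix, SimpleGraph.degMatrix, SimpleGraph.adjMatrix,
    Matrix.sub_apply, Matrix.diagonal_apply, Matrix.of_apply]

lemma lap_symm {α : Type*} [Fintype α] (G : SimpleGraph α) : (lap G)ᵀ = lap G := by
  unfold lap
  exact SimpleGraph.isSymm_lapMatrix ℝ G

lemma degree_eq_sum {α : Type*} [Fintype α] (G : SimpleGraph α) (u : α) :
    (G.degree u : ℝ) = ∑ w, if G.Adj u w then (1 : ℝ) else 0 := by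
  classical
  rw [Finset.sum_boole]
  norm_num
  rw [← SimpleGraph.neighborFinset_eq_filter]
  rfl

lemma lap_rowsum {α : Type*} [Fintype α] (G : SimpleGraph α) (u : α) :
    ∑ w, lap G u w = 0 := by
  classical
  have h1 : ∑ w, lap G u w
      = ∑ w, ((if u = w then (G.degree u : ℝ) else 0) - (if G.Adj u w then 1 else 0)) :=
    Finset.sum_congr rfl fun w _ => lap_apply G u w
  rw [h1, Finset.sum_sub_distrib, Finset.sum_ite_eq, if_pos (Finset.mem_univ u),
    ← degree_eq_sum, sub_self]

lemma LD_entry {n m : ℕ} (hm : 0 < m) (u v : VT n m) :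
    ∑ w, lap (Gc n m hm) u w * (dn w v : ℝ)
      = (2 - ((Gc n m hm).degree u : ℝ)) - (if u = v then 2 else 0) := by
  classical
  have key := sum_key hm u v
  have expand : ∀ w : VT n m, (if (Gc n m hm).Adj u w then (1 + (dn u v : ℝ) - dn w v) else 0)
      = (1 + (dn u v : ℝ)) * (if (Gc n m hm).Adj u w then (1 : ℝ) else 0)
        - (if (Gc n m hm).Adj u w then (1 : ℝ) else 0) * (dn w v : ℝ) := by
    intro w; split_ifs <;> ring
  rw [Finset.sum_congr rfl (fun w _ => expand w), Finset.sum_sub_distrib,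
    ← Finset.mul_sum, ← degree_eq_sum] at key
  have h1 : ∑ w, lap (Gc n m hm) u w * (dn w v : ℝ)
      = ∑ w, ((if u = w then ((Gc n m hm).degree u : ℝ) else 0) * (dn w v : ℝ)
          - (if (Gc n m hm).Adj u w then (1 : ℝ) else 0) * (dn w v : ℝ)) :=
    Finset.sum_congr rfl fun w _ => by rw [lap_apply]; ring
  rw [h1, Finset.sum_sub_distrib]
  have h2 : ∑ w, (if u = w then ((Gc n m hm).degree u : ℝ) else 0) * (dn w v : ℝ)
      = ((Gc n m hm).degree u : ℝ) * (dn u v : ℝ) := by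
    simp only [ite_mul, zero_mul]
    rw [Finset.sum_ite_eq, if_pos (Finset.mem_univ u)]
  rw [h2]
  by_cases h : u = v
  · subst h
    rw [if_pos rfl] at key ⊢
    simp only [dn_self, Nat.cast_zero] at key ⊢
    linarith
  · rw [if_neg h] at key ⊢
    linarith



section MatrixLayer

variable {n m : ℕ}

def DmM (n m : ℕ) : Matrix (VT n m) (VT n m) ℝ := Matrix.of fun u v => (dn u v : ℝ)
def JM (n m : ℕ) : Matrix (VT n m) (VT n m) ℝ := Matrix.of fun _ _ => 1
noncomputable def PM (n m : ℕ) : Matrix (VT n m) (VT n m) ℝ := 1 - (((n * m : ℕ) : ℝ))⁻¹ • JM n m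
noncomputable def CM (n m : ℕ) (hm : 0 < m) : Matrix (VT n m) (VT n m) ℝ :=
  Matrix.of fun u _ => 2 - ((Gc n m hm).degree u : ℝ)
noncomputable def BM (n m : ℕ) (hm : 0 < m) : Matrix (VT n m) (VT n m) ℝ :=
  (-(2 : ℝ)⁻¹) • (PM n m * (DmM n m * PM n m))

lemma card_VT (n m : ℕ) : Fintype.card (VT n m) = n * m := by
  simp [Fintype.card_sigma]

lemma hJJ : JM n m * JM n m = (((n * m : ℕ) : ℝ)) • JM n m := by
  ext u v
  simp [JM, Matrix.mul_apply, Finset.card_univ, card_VT]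

lemma hLJ (hm : 0 < m) : lap (Gc n m hm) * JM n m = 0 := by
  ext u v
  simp only [Matrix.mul_apply, JM, Matrix.of_apply, mul_one, Matrix.zero_apply]
  exact lap_rowsum _ u

lemma hJT : (JM n m)ᵀ = JM n m := rfl

lemma hJL (hm : 0 < m) : JM n m * lap (Gc n m hm) = 0 := by
  have := congrArg Matrix.transpose (hLJ (n := n) hm)
  rwa [Matrix.transpose_mul, hJT, lap_symm, Matrix.transpose_zero] at this

lemma hJP (hN : ((n * m : ℕ) : ℝ) ≠ 0) : JM n m * PM n m = 0 := by
  rw [PM, Matrix.mul_sub, Matrix.mul_one, Matrix.mul_smul, hJJ, smul_smul,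
    inv_mul_cancel₀ hN, one_smul, sub_self]

lemma hPJ (hN : ((n * m : ℕ) : ℝ) ≠ 0) : PM n m * JM n m = 0 := by
  rw [PM, Matrix.sub_mul, Matrix.one_mul, Matrix.smul_mul, hJJ, smul_smul,
    inv_mul_cancel₀ hN, one_smul, sub_self]

lemma hPP (hN : ((n * m : ℕ) : ℝ) ≠ 0) : PM n m * PM n m = PM n m := by
  nth_rewrite 1 [PM]
  rw [Matrix.sub_mul, Matrix.one_mul, Matrix.smul_mul, hJP hN, smul_zero, sub_zero]

lemma hPT : (PM n m)ᵀ = PM n m := by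
  rw [PM, Matrix.transpose_sub, Matrix.transpose_one, Matrix.transpose_smul, hJT]

lemma hDT : (DmM n m)ᵀ = DmM n m := by
  ext u v
  simp only [Matrix.transpose_apply, DmM, Matrix.of_apply]
  rw [dn_comm]

lemma hLP (hm : 0 < m) : lap (Gc n m hm) * PM n m = lap (Gc n m hm) := by
  rw [PM, Matrix.mul_sub, Matrix.mul_one, Matrix.mul_smul, hLJ hm, smul_zero, sub_zero]

lemma hPL (hm : 0 < m) : PM n m * lap (Gc n m hm) = lap (Gc n m hm) := by
  rw [PM, Matrix.sub_mul, Matrix.one_mul, Matrix.smul_mul, hJL hm, smul_zero, sub_zero]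

lemma hLD (hm : 0 < m) :
    lap (Gc n m hm) * DmM n m = CM n m hm - (2 : ℝ) • (1 : Matrix (VT n m) (VT n m) ℝ) := by
  ext u v
  rw [Matrix.mul_apply]
  have := LD_entry hm u v
  simp only [DmM, Matrix.of_apply]
  rw [this]
  simp only [Matrix.sub_apply, CM, Matrix.of_apply, Matrix.smul_apply, Matrix.one_apply]
  by_cases h : u = v <;> simp [h]

lemma hCJ (hm : 0 < m) : CM n m hm * JM n m = ((n * m : ℕ) : ℝ) • CM n m hm := by
  ext u v
  simp [CM, JM, Matrix.mul_apply, Finset.card_univ, card_VT, mul_comm]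
  ring

lemma hCP (hm : 0 < m) (hN : ((n * m : ℕ) : ℝ) ≠ 0) : CM n m hm * PM n m = 0 := by
  rw [PM, Matrix.mul_sub, Matrix.mul_one, Matrix.mul_smul, hCJ hm, smul_smul,
    inv_mul_cancel₀ hN, one_smul, sub_self]

lemma hLDP (hm : 0 < m) (hN : ((n * m : ℕ) : ℝ) ≠ 0) :
    lap (Gc n m hm) * DmM n m * PM n m = (-2 : ℝ) • PM n m := by
  rw [hLD hm, Matrix.sub_mul, hCP hm hN, Matrix.smul_mul, Matrix.one_mul, zero_sub, neg_smul]

lemma hLB (hm : 0 < m) (hN : ((n * m : ℕ) : ℝ) ≠ 0) :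
    lap (Gc n m hm) * BM n m hm = PM n m := by
  rw [BM, Matrix.mul_smul, ← Matrix.mul_assoc, ← Matrix.mul_assoc, hLP hm, Matrix.mul_assoc,
    ← Matrix.mul_assoc, hLDP hm hN]
  rw [smul_smul]
  norm_num

lemma hBT (hm : 0 < m) : (BM n m hm)ᵀ = BM n m hm := by
  rw [BM, Matrix.transpose_smul, Matrix.transpose_mul, Matrix.transpose_mul, hPT, hDT,
    Matrix.mul_assoc]

lemma hBL (hm : 0 < m) (hN : ((n * m : ℕ) : ℝ) ≠ 0) :
    BM n m hm * lap (Gc n m hm) = PM n m := by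
  have : BM n m hm * lap (Gc n m hm) = (lap (Gc n m hm) * BM n m hm)ᵀ := by
    rw [Matrix.transpose_mul, hBT hm, lap_symm]
  rw [this, hLB hm hN, hPT]

lemma hMP (hm : 0 < m) (hN : ((n * m : ℕ) : ℝ) ≠ 0) :
    IsMoorePenroseInv (lap (Gc n m hm)) (BM n m hm) := by
  refine ⟨?_, ?_, ?_, ?_⟩
  · rw [hLB hm hN, hPL hm]
  · rw [hBL hm hN, BM, Matrix.mul_smul, ← Matrix.mul_assoc, hPP hN]
  · rw [hLB hm hN, hPT]
  · rw [hBL hm hN, hPT]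

end MatrixLayer

lemma MP_unique {α : Type*} [Fintype α] {A B C : Matrix α α ℝ}
    (hB : IsMoorePenroseInv A B) (hC : IsMoorePenroseInv A C) : B = C := by
  obtain ⟨hB1, hB2, hB3, hB4⟩ := hB
  obtain ⟨hC1, hC2, hC3, hC4⟩ := hC
  have hAB : A * B = A * C := by
    calc A * B = (A * B)ᵀ := hB3.symm
      _ = Bᵀ * Aᵀ := Matrix.transpose_mul _ _
      _ = Bᵀ * (A * C * A)ᵀ := by rw [hC1]
      _ = Bᵀ * (Aᵀ * (A * C)ᵀ) := by rw [Matrix.transpose_mul]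
      _ = (Bᵀ * Aᵀ) * (A * C)ᵀ := by rw [Matrix.mul_assoc]
      _ = (A * B)ᵀ * (A * C) := by rw [← Matrix.transpose_mul, hC3]
      _ = (A * B) * (A * C) := by rw [hB3]
      _ = (A * B * A) * C := by rw [Matrix.mul_assoc (A*B) A C]
      _ = A * C := by rw [hB1]
  have hBA : B * A = C * A := by
    calc B * A = (B * A)ᵀ := hB4.symm
      _ = Aᵀ * Bᵀ := Matrix.transpose_mul _ _
      _ = (A * C * A)ᵀ * Bᵀ := by rw [hC1]
      _ = ((C * A)ᵀ * Aᵀ) * Bᵀ := by rw [Matrix.mul_assoc A C A, Matrix.transpose_mul]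
      _ = (C * A)ᵀ * (Aᵀ * Bᵀ) := by rw [Matrix.mul_assoc]
      _ = (C * A) * (B * A)ᵀ := by rw [hC4, ← Matrix.transpose_mul]
      _ = (C * A) * (B * A) := by rw [hB4]
      _ = C * (A * B * A) := by rw [Matrix.mul_assoc, Matrix.mul_assoc]
      _ = C * A := by rw [hB1]
  calc B = B * A * B := hB2.symm
    _ = C * A * B := by rw [hBA]
    _ = C * (A * B) := Matrix.mul_assoc _ _ _
    _ = C * (A * C) := by rw [hAB]
    _ = C * A * C := (Matrix.mul_assoc _ _ _).symm
    _ = C := hC2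

lemma pinv_eq {α : Type*} [Fintype α] {A B : Matrix α α ℝ} (h : IsMoorePenroseInv A B) :
    pinv A = B := by
  have hex : ∃ C, IsMoorePenroseInv A C := ⟨B, h⟩
  rw [pinv, dif_pos hex]
  exact MP_unique hex.choose_spec h




section Res

variable {n m : ℕ}

lemma sum_evec_sub {α : Type*} [Fintype α] (u v : α) :
    ∑ z, (evec u - evec v) z = 0 := by
  classical
  simp [evec, Finset.sum_sub_distrib, Finset.sum_ite_eq', Pi.sub_apply]

lemma dot_evec_sub {α : Type*} [Fintype α] (u v : α) (g : α → ℝ) :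
    (evec u - evec v) ⬝ᵥ g = g u - g v := by
  classical
  simp only [dotProduct, Pi.sub_apply, evec, sub_mul, ite_mul, one_mul, zero_mul]
  rw [Finset.sum_sub_distrib, Finset.sum_ite_eq', Finset.sum_ite_eq',
    if_pos (Finset.mem_univ u), if_pos (Finset.mem_univ v)]

lemma JM_mulVec (x : VT n m → ℝ) (hx : ∑ z, x z = 0) : JM n m *ᵥ x = 0 := by
  funext w
  simp [JM, Matrix.mulVec, dotProduct, hx]

lemma PM_mulVec (x : VT n m → ℝ) (hx : ∑ z, x z = 0) : PM n m *ᵥ x = x := by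
  rw [PM, Matrix.sub_mulVec, Matrix.one_mulVec, Matrix.smul_mulVec, JM_mulVec x hx,
    smul_zero, sub_zero]

lemma dot_PM (x : VT n m → ℝ) (hx : ∑ z, x z = 0) (y : VT n m → ℝ) :
    x ⬝ᵥ (PM n m *ᵥ y) = x ⬝ᵥ y := by
  rw [PM, Matrix.sub_mulVec, Matrix.one_mulVec, Matrix.smul_mulVec,
    dotProduct_sub, dotProduct_smul]
  have hc : x ⬝ᵥ (JM n m *ᵥ y) = 0 := by
    simp only [dotProduct, Matrix.mulVec, JM, Matrix.of_apply, dotProduct,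
      one_mul]
    rw [← Finset.sum_mul, hx, zero_mul]
  rw [hc]
  simp

lemma res_eq (hm : 0 < m) (hN : ((n * m : ℕ) : ℝ) ≠ 0) (u v : VT n m) :
    resistance (Gc n m hm) u v = (dn u v : ℝ) := by
  have hx : ∑ z, (evec u - evec v) z = 0 := sum_evec_sub u v
  rw [resistance, pinv_eq (hMP hm hN), BM, Matrix.smul_mulVec,
    dotProduct_smul]
  set x := evec u - evec v with hxdef
  have h1 : (PM n m * (DmM n m * PM n m)) *ᵥ x = PM n m *ᵥ (DmM n m *ᵥ x) := by
    rw [← Matrix.mulVec_mulVec, ← Matrix.mulVec_mulVec, PM_mulVec x hx]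
  rw [h1, dot_PM x hx]
  have h2 : DmM n m *ᵥ x = fun w => (dn w u : ℝ) - (dn w v : ℝ) := by
    funext w
    have : (DmM n m *ᵥ x) w = (fun z => (dn w z : ℝ)) ⬝ᵥ x := rfl
    rw [this, dotProduct_comm, hxdef, dot_evec_sub]
  rw [h2, hxdef, dot_evec_sub]
  have e1 : (dn u u : ℝ) = 0 := by rw [dn_self]; norm_num
  have e2 : (dn v v : ℝ) = 0 := by rw [dn_self]; norm_num
  have e3 : (dn v u : ℝ) = (dn u v : ℝ) := by rw [dn_comm]
  simp only [e1, e2, e3, smul_eq_mul]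
  ring

end Res

section Sums

open Finset

lemma Sl (k : ℕ) : ∑ b ∈ range k, (b : ℝ) = k * (k - 1) / 2 := by
  induction k with
  | zero => simp
  | succ k ih =>
    rw [Finset.sum_range_succ, ih]
    push_cast
    ring

lemma sum_shift (k : ℕ) (c : ℝ) :
    ∑ b ∈ range k, (c + (b : ℝ)) = k * c + k * (k - 1) / 2 := by
  rw [Finset.sum_add_distrib, Finset.sum_const, Finset.card_range, nsmul_eq_mul, Sl]

lemma edge_sum (k : ℕ) : ∑ b ∈ range k, (Nat.dist k b : ℝ) = k * k - k * (k - 1) / 2 := by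
  have h : ∀ b ∈ range k, (Nat.dist k b : ℝ) = (k : ℝ) - b := by
    intro b hb
    have hb' : b < k := Finset.mem_range.1 hb
    have : Nat.dist k b = k - b := by simp [Nat.dist]; omega
    rw [this, Nat.cast_sub hb'.le]
  rw [Finset.sum_congr rfl h, Finset.sum_sub_distrib, Finset.sum_const, Finset.card_range,
    nsmul_eq_mul, Sl]

lemma Tl (k : ℕ) :
    ∑ a ∈ range k, ∑ b ∈ range k, (Nat.dist a b : ℝ) = k * ((k : ℝ) ^ 2 - 1) / 3 := by
  induction k with
  | zero => simp
  | succ k ih =>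
    rw [Finset.sum_range_succ]
    have hrow : ∀ a, a ∈ range k → ∑ b ∈ range (k + 1), (Nat.dist a b : ℝ)
        = (∑ b ∈ range k, (Nat.dist a b : ℝ)) + (Nat.dist a k : ℝ) := by
      intro a _
      rw [Finset.sum_range_succ]
    rw [Finset.sum_congr rfl hrow, Finset.sum_add_distrib, ih, Finset.sum_range_succ]
    have e1 : ∀ a, Nat.dist a k = Nat.dist k a := fun a => Nat.dist_comm a k
    rw [Finset.sum_congr rfl (fun a _ => by rw [e1 a]), edge_sum, Nat.dist_self]
    push_cast
    ring

lemma range_total (n m : ℕ) :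
    ∑ i ∈ range n, ∑ j ∈ range m, ∑ i' ∈ range n, ∑ j' ∈ range m, (DN i j i' j' : ℝ)
      = (m : ℝ) ^ 2 * ((n : ℝ) * ((n : ℝ) ^ 2 - 1) / 3)
        + (n : ℝ) ^ 2 * ((m : ℝ) ^ 2 * ((m : ℝ) - 1))
        + (n : ℝ) * ((m : ℝ) * ((m : ℝ) ^ 2 - 1) / 3 - (m : ℝ) ^ 2 * ((m : ℝ) - 1)) := by
  have G2 : ∀ i i' : ℕ, ∑ j ∈ range m, ∑ j' ∈ range m, (DN i j i' j' : ℝ)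
      = (m : ℝ) ^ 2 * (Nat.dist i i' : ℝ) + (m : ℝ) ^ 2 * ((m : ℝ) - 1)
        + (if i = i' then (m : ℝ) * ((m : ℝ) ^ 2 - 1) / 3 - (m : ℝ) ^ 2 * ((m : ℝ) - 1) else 0) := by
    intro i i'
    by_cases h : i = i'
    · subst h
      have : ∀ j j' : ℕ, (DN i j i j' : ℝ) = (Nat.dist j j' : ℝ) := by
        intro j j'; rw [DN, if_pos rfl]
      rw [Finset.sum_congr rfl fun j _ => Finset.sum_congr rfl fun j' _ => this j j', Tl,
        if_pos rfl, Nat.dist_self]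
      push_cast
      ring
    · have hDN : ∀ j j' : ℕ, (DN i j i' j' : ℝ) = (Nat.dist i i' : ℝ) + j + j' := by
        intro j j'; rw [DN, if_neg h]; push_cast; ring
      have hinner : ∀ j : ℕ, ∑ j' ∈ range m, ((Nat.dist i i' : ℝ) + j + j')
          = (m : ℝ) * ((Nat.dist i i' : ℝ) + j) + m * (m - 1) / 2 := fun j => sum_shift m _
      rw [Finset.sum_congr rfl fun j _ => Finset.sum_congr rfl fun j' _ => hDN j j',
        Finset.sum_congr rfl fun j _ => hinner j, Finset.sum_add_distrib, Finset.sum_const,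
        Finset.card_range, nsmul_eq_mul, ← Finset.mul_sum, sum_shift, if_neg h]
      ring
  rw [Finset.sum_congr rfl fun i _ => (Finset.sum_comm : ∑ j ∈ range m, ∑ i' ∈ range n, ∑ j' ∈ range m, (DN i j i' j' : ℝ) = _)]
  rw [Finset.sum_congr rfl fun i _ => Finset.sum_congr rfl fun i' _ => G2 i i']
  have hsplit : ∀ i : ℕ, i ∈ range n → ∑ i' ∈ range n,
      ((m : ℝ) ^ 2 * (Nat.dist i i' : ℝ) + (m : ℝ) ^ 2 * ((m : ℝ) - 1)
        + (if i = i' then (m : ℝ) * ((m : ℝ) ^ 2 - 1) / 3 - (m : ℝ) ^ 2 * ((m : ℝ) - 1) else 0))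
      = (m : ℝ) ^ 2 * (∑ i' ∈ range n, (Nat.dist i i' : ℝ))
        + (n : ℝ) * ((m : ℝ) ^ 2 * ((m : ℝ) - 1))
        + ((m : ℝ) * ((m : ℝ) ^ 2 - 1) / 3 - (m : ℝ) ^ 2 * ((m : ℝ) - 1)) := by
    intro i hi
    rw [Finset.sum_add_distrib, Finset.sum_add_distrib, Finset.sum_const, Finset.card_range,
      nsmul_eq_mul, ← Finset.mul_sum, Finset.sum_ite_eq, if_pos hi]
  rw [Finset.sum_congr rfl hsplit, Finset.sum_add_distrib, Finset.sum_add_distrib,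
    Finset.sum_const, Finset.card_range, nsmul_eq_mul, ← Finset.mul_sum, Finset.sum_const,
    Finset.card_range, nsmul_eq_mul, Tl]
  ring

lemma dn_total (n m : ℕ) :
    ∑ u : VT n m, ∑ v : VT n m, (dn u v : ℝ)
      = (m : ℝ) ^ 2 * ((n : ℝ) * ((n : ℝ) ^ 2 - 1) / 3)
        + (n : ℝ) ^ 2 * ((m : ℝ) ^ 2 * ((m : ℝ) - 1))
        + (n : ℝ) * ((m : ℝ) * ((m : ℝ) ^ 2 - 1) / 3 - (m : ℝ) ^ 2 * ((m : ℝ) - 1)) := by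
  have hsig : ∀ f : VT n m → ℝ, ∑ u : VT n m, f u = ∑ i : Fin n, ∑ j : Fin m, f ⟨i, j⟩ := by
    intro f
    rw [← Finset.univ_sigma_univ, Finset.sum_sigma]
  rw [hsig, ← range_total n m]
  have h1 : ∀ i (j : Fin m), ∑ v : VT n m, (dn ⟨i, j⟩ v : ℝ)
      = ∑ i' : Fin n, ∑ j' : Fin m, (DN i.val j.val i'.val j'.val : ℝ) := fun i j => hsig _
  rw [Finset.sum_congr rfl fun i _ => Finset.sum_congr rfl fun j _ => h1 i j]
  rw [Finset.sum_congr rfl fun i _ => Finset.sum_congr rfl fun j _ =>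
      Finset.sum_congr rfl fun i' _ =>
        Fin.sum_univ_eq_sum_range (fun t => ((DN i.val j.val i'.val t : ℕ) : ℝ)) m]
  rw [Finset.sum_congr rfl fun i _ => Finset.sum_congr rfl fun j _ =>
      Fin.sum_univ_eq_sum_range (fun t => ∑ j' ∈ range m, ((DN i.val j.val t j' : ℕ) : ℝ)) n]
  rw [Finset.sum_congr rfl fun i _ =>
      Fin.sum_univ_eq_sum_range (fun t => ∑ i' ∈ range n, ∑ j' ∈ range m, ((DN i.val t i' j' : ℕ) : ℝ)) m]
  rw [Fin.sum_univ_eq_sum_range (fun t => ∑ j ∈ range m, ∑ i' ∈ range n, ∑ j' ∈ range m, ((DN t j i' j' : ℕ) : ℝ)) n]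

end Sums

/-- The composite graph made of `n` path subgraphs on `m`
vertices each (bridge node an endpoint of the path) over a path backbone
attains the upper bound on coherence. -/
theorem coherence_composite_path_of_paths_attains_upper_bound
    {n m : ℕ} (hn : 2 ≤ n) (hm : 0 < m) :
    coherence (composite (fun _ : Fin n => Fin m)
        (fun _ => SimpleGraph.pathGraph m) (fun _ => (⟨0, hm⟩ : Fin m))
        (SimpleGraph.pathGraph n)) =
      (n : ℝ) * (m : ℝ) * ((m : ℝ) ^ 2 - 1) / (12 * ((n * m : ℕ) : ℝ)) +
      (n : ℝ) * (m : ℝ) ^ 2 * ((n : ℝ) ^ 2 - 1) / (12 * ((n * m : ℕ) : ℝ)) +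
      (n : ℝ) * (m : ℝ) ^ 2 * ((m : ℝ) - 1) * ((n : ℝ) - 1) / (4 * ((n * m : ℕ) : ℝ)) := by
  classical
  have hn0 : 0 < n := lt_of_lt_of_le (by norm_num) hn
  have hN : ((n * m : ℕ) : ℝ) ≠ 0 := by
    have : 0 < n * m := Nat.mul_pos hn0 hm
    exact_mod_cast Nat.pos_iff_ne_zero.mp this
  show coherence (Gc n m hm) = _
  rw [coherence, effRes, card_VT]
  rw [Finset.sum_congr rfl fun u _ => Finset.sum_congr rfl fun v _ => res_eq hm hN u v]
  rw [dn_total]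
  have hnR : (n : ℝ) ≠ 0 := Nat.cast_ne_zero.mpr hn0.ne'
  have hmR : (m : ℝ) ≠ 0 := Nat.cast_ne_zero.mpr hm.ne'
  push_cast
  field_simp
  ring
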